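/- The function h₂: [0,1] → [0,1] defined piecewise by h₂(x₁) = (5 − x₁ − √(x₁² + 6x₁ + 13))/4 on [0, β₁], h₂(x₁) = √(8x₁ + 54) − x₁ − 7 on [β₁, β₂], h₂(x₁) = x₁ on [β₂, β₃], h₂(x₁) = −(4x₁² − 6x₁ + 5)/(2(x₁ − 4)) on [β₃, β₄], h₂(x₁) = √(12x₁ + 42) − 6 − x₁ on [β₄, β₅], and h₂(x₁) = 3/2 − (x₁ + √(x₁² − 4x₁ + 16))/4 on [β₅, 1], is well defined (the branch formulas agree at each βᵢ) and continuous on [0,1]; it is moreover differentiable at β₁, β₄ and β₅, and satisfies h₂(0) = h₂(1) = (5 − √13)/4. -/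

import Mathlib

noncomputable def β₁ : ℝ := (3/2) * Real.sqrt 2 - 2
noncomputable def β₂ : ℝ := (Real.sqrt 30 - 5)/2
noncomputable def β₃ : ℝ := (7 - Real.sqrt 19)/6
noncomputable def β₄ : ℝ := (11 - 3 * Real.sqrt 11)/2
noncomputable def β₅ : ℝ := (7 - 3 * Real.sqrt 3)/2

lemma sq2 : Real.sqrt 2 ^ 2 = 2 := Real.sq_sqrt (by norm_num)
lemma sq3 : Real.sqrt 3 ^ 2 = 3 := Real.sq_sqrt (by norm_num)
lemma sq11 : Real.sqrt 11 ^ 2 = 11 := Real.sq_sqrt (by norm_num)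
lemma sq19 : Real.sqrt 19 ^ 2 = 19 := Real.sq_sqrt (by norm_num)
lemma sq30 : Real.sqrt 30 ^ 2 = 30 := Real.sq_sqrt (by norm_num)

lemma b2lo : 1.414 < Real.sqrt 2 := by nlinarith [sq2, Real.sqrt_nonneg 2]
lemma b2hi : Real.sqrt 2 < 1.415 := by nlinarith [sq2, Real.sqrt_nonneg 2]
lemma b3lo : 1.732 < Real.sqrt 3 := by nlinarith [sq3, Real.sqrt_nonneg 3]
lemma b3hi : Real.sqrt 3 < 1.733 := by nlinarith [sq3, Real.sqrt_nonneg 3]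
lemma b11lo : 3.316 < Real.sqrt 11 := by nlinarith [sq11, Real.sqrt_nonneg 11]
lemma b11hi : Real.sqrt 11 < 3.317 := by nlinarith [sq11, Real.sqrt_nonneg 11]
lemma b19lo : 4.358 < Real.sqrt 19 := by nlinarith [sq19, Real.sqrt_nonneg 19]
lemma b19hi : Real.sqrt 19 < 4.359 := by nlinarith [sq19, Real.sqrt_nonneg 19]
lemma b30lo : 5.477 < Real.sqrt 30 := by nlinarith [sq30, Real.sqrt_nonneg 30]
lemma b30hi : Real.sqrt 30 < 5.478 := by nlinarith [sq30, Real.sqrt_nonneg 30]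

lemma hβ₁0 : 0 < β₁ := by unfold β₁; nlinarith [b2lo]
lemma hβ₁' : β₁ < 0.13 := by unfold β₁; nlinarith [b2hi]
lemma hβ₂' : 0.23 < β₂ ∧ β₂ < 0.24 := by unfold β₂; constructor <;> nlinarith [b30lo, b30hi]
lemma hβ₃' : 0.44 < β₃ ∧ β₃ < 0.45 := by unfold β₃; constructor <;> nlinarith [b19lo, b19hi]
lemma hβ₄' : 0.52 < β₄ ∧ β₄ < 0.53 := by unfold β₄; constructor <;> nlinarith [b11lo, b11hi]
lemma hβ₅' : 0.90 < β₅ ∧ β₅ < 0.91 := by unfold β₅; constructor <;> nlinarith [b3lo, b3hi]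
lemma h12 : β₁ < β₂ := by nlinarith [hβ₁', hβ₂'.1]
lemma h23 : β₂ < β₃ := by nlinarith [hβ₂'.2, hβ₃'.1]
lemma h34 : β₃ < β₄ := by nlinarith [hβ₃'.2, hβ₄'.1]
lemma h45 : β₄ < β₅ := by nlinarith [hβ₄'.2, hβ₅'.1]
lemma h51 : β₅ < 1 := by nlinarith [hβ₅'.2]

-- closed forms
lemma cf1 : Real.sqrt (β₁^2 + 6*β₁ + 13) = 3 + Real.sqrt 2 / 2 := by
  have h : β₁^2 + 6*β₁ + 13 = (3 + Real.sqrt 2 / 2)^2 := by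
    unfold β₁; linear_combination 2 * sq2
  rw [h, Real.sqrt_sq (by positivity)]
lemma cf2 : Real.sqrt (8*β₁ + 54) = 6 + Real.sqrt 2 := by
  have h : 8*β₁ + 54 = (6 + Real.sqrt 2)^2 := by unfold β₁; linear_combination -sq2
  rw [h, Real.sqrt_sq (by positivity)]
lemma cf3 : Real.sqrt (8*β₂ + 54) = 2 + Real.sqrt 30 := by
  have h : 8*β₂ + 54 = (2 + Real.sqrt 30)^2 := by unfold β₂; linear_combination -sq30
  rw [h, Real.sqrt_sq (by positivity)]
lemma cf4 : Real.sqrt (12*β₄ + 42) = 3 * Real.sqrt 11 - 3 := by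
  have h : 12*β₄ + 42 = (3 * Real.sqrt 11 - 3)^2 := by unfold β₄; linear_combination -9*sq11
  rw [h, Real.sqrt_sq (by nlinarith [b11lo])]
lemma cf5 : Real.sqrt (12*β₅ + 42) = 9 - Real.sqrt 3 := by
  have h : 12*β₅ + 42 = (9 - Real.sqrt 3)^2 := by unfold β₅; linear_combination -sq3
  rw [h, Real.sqrt_sq (by nlinarith [b3hi])]
lemma cf6 : Real.sqrt (β₅^2 - 4*β₅ + 16) = (9 - Real.sqrt 3)/2 := by
  have h : β₅^2 - 4*β₅ + 16 = ((9 - Real.sqrt 3)/2)^2 := by unfold β₅; linear_combination 2*sq3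
  rw [h, Real.sqrt_sq (by nlinarith [b3hi])]

-- junction equalities
lemma e1 : (5 - β₁ - Real.sqrt (β₁^2 + 6*β₁ + 13))/4 = Real.sqrt (8*β₁ + 54) - β₁ - 7 := by
  rw [cf1, cf2]; unfold β₁; ring
lemma e2 : Real.sqrt (8*β₂ + 54) - β₂ - 7 = β₂ := by rw [cf3]; unfold β₂; ring
lemma e3 : β₃ = -(4*β₃^2 - 6*β₃ + 5)/(2*(β₃ - 4)) := by
  rw [eq_div_iff (by nlinarith [hβ₃'.2] : 2*(β₃ - 4) ≠ 0)]
  unfold β₃; linear_combination sq19/6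
lemma e4 : -(4*β₄^2 - 6*β₄ + 5)/(2*(β₄ - 4)) = Real.sqrt (12*β₄ + 42) - 6 - β₄ := by
  rw [cf4, div_eq_iff (by nlinarith [hβ₄'.2] : 2*(β₄ - 4) ≠ 0)]
  unfold β₄; linear_combination (9/2) * sq11
lemma e5 : Real.sqrt (12*β₅ + 42) - 6 - β₅ = 3/2 - (β₅ + Real.sqrt (β₅^2 - 4*β₅ + 16))/4 := by
  rw [cf5, cf6]; unfold β₅; ring


/-- The optimal second-stage threshold function in Robbins' problem with 4 observations. -/
noncomputable def h₂ (x : ℝ) : ℝ :=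
  if x ≤ β₁ then (5 - x - Real.sqrt (x^2 + 6*x + 13))/4
  else if x ≤ β₂ then Real.sqrt (8*x + 54) - x - 7
  else if x ≤ β₃ then x
  else if x ≤ β₄ then -(4*x^2 - 6*x + 5)/(2*(x - 4))
  else if x ≤ β₅ then Real.sqrt (12*x + 42) - 6 - x
  else 3/2 - (x + Real.sqrt (x^2 - 4*x + 16))/4

noncomputable def G : ℝ → ℝ := fun x =>
  if x ≤ β₁ then (5 - x - Real.sqrt (x^2 + 6*x + 13))/4
  else if x ≤ β₂ then Real.sqrt (8*x + 54) - x - 7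
  else if x ≤ β₃ then x
  else if x ≤ β₄ then -(4*x^2 - 6*x + 5)/(2*(min x 2 - 4))
  else if x ≤ β₅ then Real.sqrt (12*x + 42) - 6 - x
  else 3/2 - (x + Real.sqrt (x^2 - 4*x + 16))/4

lemma hG : h₂ = G := by
  funext x
  unfold h₂ G
  split_ifs with h1 h2 h3 h4 h5 <;> try rfl
  rw [min_eq_left (by nlinarith [hβ₄'.2])]

lemma contG : Continuous G := by
  unfold G
  apply Continuous.if_le ?_ ?_ continuous_id continuous_const ?_
  · fun_prop
  apply Continuous.if_le ?_ ?_ continuous_id continuous_const ?_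
  · fun_prop
  apply Continuous.if_le continuous_id ?_ continuous_id continuous_const ?_
  apply Continuous.if_le ?_ ?_ continuous_id continuous_const ?_
  · apply Continuous.div (by fun_prop) (by fun_prop)
    intro x
    have := min_le_right x 2
    intro h; nlinarith
  apply Continuous.if_le ?_ ?_ continuous_id continuous_const ?_
  · fun_prop
  · fun_prop
  -- junction conditions, innermost (β₅) first
  · rintro x rfl; exact e5
  · rintro x rfl
    rw [if_pos (le_of_lt h45), min_eq_left (by nlinarith [hβ₄'.2])]
    exact e4
  · rintro x rfl
    show β₃ = _
    rw [if_pos (le_of_lt h34), min_eq_left (by nlinarith [hβ₄'.2, h34])]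
    exact e3
  · rintro x rfl
    rw [if_pos (le_of_lt h23)]
    exact e2
  · rintro x rfl
    rw [if_pos (le_of_lt h12)]
    exact e1
lemma range_h₂ : ∀ x ∈ Set.Icc (0:ℝ) 1, h₂ x ∈ Set.Icc (0:ℝ) 1 := by
  rintro x ⟨hx0, hx1⟩
  simp only [Set.mem_Icc]
  unfold h₂
  split_ifs with h1 h2 h3 h4 h5
  · have hs := Real.sq_sqrt (show (0:ℝ) ≤ x^2 + 6*x + 13 by nlinarith)
    have hn := Real.sqrt_nonneg (x^2 + 6*x + 13)
    have hx' : x < 0.13 := lt_of_le_of_lt h1 hβ₁'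
    constructor
    · nlinarith [sq_nonneg (Real.sqrt (x^2 + 6*x + 13) + (5 - x))]
    · nlinarith [sq_nonneg (1 - x)]
  · have hs := Real.sq_sqrt (show (0:ℝ) ≤ 8*x + 54 by nlinarith)
    have hn := Real.sqrt_nonneg (8*x + 54)
    have hx' : x < 0.24 := lt_of_le_of_lt h2 hβ₂'.2
    constructor
    · nlinarith [sq_nonneg (Real.sqrt (8*x + 54) + (x + 7))]
    · nlinarith [sq_nonneg (Real.sqrt (8*x + 54) + (x + 8))]
  · exact ⟨hx0, hx1⟩
  · have hd : (0:ℝ) < 2*(4 - x) := by linarith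
    have he : -(4*x^2 - 6*x + 5)/(2*(x - 4)) = (4*x^2 - 6*x + 5)/(2*(4 - x)) := by
      rw [div_eq_div_iff (by linarith) (by linarith)]; ring
    rw [he]
    constructor
    · apply div_nonneg (by nlinarith) (by linarith)
    · rw [div_le_one hd]; nlinarith
  · have hs := Real.sq_sqrt (show (0:ℝ) ≤ 12*x + 42 by nlinarith)
    have hn := Real.sqrt_nonneg (12*x + 42)
    constructor
    · nlinarith [sq_nonneg (Real.sqrt (12*x + 42) + (x + 6))]
    · nlinarith [sq_nonneg (Real.sqrt (12*x + 42) + (x + 7))]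
  · have hs := Real.sq_sqrt (show (0:ℝ) ≤ x^2 - 4*x + 16 by nlinarith)
    have hn := Real.sqrt_nonneg (x^2 - 4*x + 16)
    constructor
    · nlinarith [sq_nonneg (Real.sqrt (x^2 - 4*x + 16) + (6 - x))]
    · nlinarith [sq_nonneg (Real.sqrt (x^2 - 4*x + 16) + (2 - x))]
noncomputable def D1 : ℝ := -(5 + 2*Real.sqrt 2)/17

lemma hd_f1 : HasDerivAt (fun y : ℝ => (5 - y - Real.sqrt (y^2 + 6*y + 13))/4) D1 β₁ := by
  have hq : HasDerivAt (fun y : ℝ => y^2 + 6*y + 13) (2*β₁ + 6) β₁ := by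
    simpa using (((hasDerivAt_id β₁).pow 2).add ((hasDerivAt_id β₁).const_mul 6)).add_const 13
  have hne : β₁^2 + 6*β₁ + 13 ≠ 0 := by nlinarith [hβ₁0, hβ₁']
  have hs := hq.sqrt hne
  have h := (((hasDerivAt_const β₁ (5:ℝ)).sub (hasDerivAt_id β₁)).sub hs).div_const 4
  refine h.congr_deriv ?_
  symm
  rw [cf1]
  unfold D1
  have h2 : (0:ℝ) < 3 + Real.sqrt 2 / 2 := by nlinarith [b2lo]
  field_simp
  unfold β₁
  ring_nf
  nlinarith [sq2]

lemma hd_f2 : HasDerivAt (fun y : ℝ => Real.sqrt (8*y + 54) - y - 7) D1 β₁ := by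
  have hq : HasDerivAt (fun y : ℝ => 8*y + 54) 8 β₁ := by
    simpa using ((hasDerivAt_id β₁).const_mul 8).add_const 54
  have hne : 8*β₁ + 54 ≠ 0 := by nlinarith [hβ₁0]
  have hs := hq.sqrt hne
  have h := (hs.sub (hasDerivAt_id β₁)).sub_const 7
  refine h.congr_deriv ?_
  symm
  rw [cf2]
  unfold D1
  have h2 : (0:ℝ) < 6 + Real.sqrt 2 := by nlinarith [b2lo]
  field_simp
  nlinarith [sq2]

lemma diff1 : DifferentiableAt ℝ h₂ β₁ := by
  have hIic : HasDerivWithinAt h₂ D1 (Set.Iic β₁) β₁ := by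
    refine hd_f1.hasDerivWithinAt.congr (fun y hy => ?_) ?_
    · simp only [h₂]; rw [if_pos (show y ≤ β₁ from hy)]
    · simp only [h₂]; rw [if_pos le_rfl]
  have hIci : HasDerivWithinAt h₂ D1 (Set.Ici β₁) β₁ := by
    refine hd_f2.hasDerivWithinAt.congr_of_eventuallyEq ?_ ?_
    · filter_upwards [self_mem_nhdsWithin,
        mem_nhdsWithin_of_mem_nhds (Iio_mem_nhds h12)] with y hy1 hy2
      by_cases hyb : y ≤ β₁
      · have : y = β₁ := le_antisymm hyb hy1
        subst this
        simp only [h₂]; rw [if_pos le_rfl]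
        exact e1
      · simp only [h₂]
        rw [if_neg hyb, if_pos (le_of_lt (Set.mem_Iio.1 hy2))]
    · simp only [h₂]; rw [if_pos le_rfl]
      exact e1
  have h := hIic.union hIci
  rw [Set.Iic_union_Ici] at h
  exact (hasDerivWithinAt_univ.1 h).differentiableAt
noncomputable def D4 : ℝ := (Real.sqrt 11 - 4)/5
noncomputable def D5 : ℝ := (Real.sqrt 3 - 4)/13

lemma hd_f5 (x : ℝ) (hx : 0 < x) :
    HasDerivAt (fun y : ℝ => Real.sqrt (12*y + 42) - 6 - y)
      (12/(2*Real.sqrt (12*x + 42)) - 1) x := by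
  have hq : HasDerivAt (fun y : ℝ => 12*y + 42) 12 x := by
    simpa using ((hasDerivAt_id x).const_mul 12).add_const 42
  have hs := hq.sqrt (by nlinarith : 12*x + 42 ≠ 0)
  exact (hs.sub_const 6).sub (hasDerivAt_id x)

lemma hd_f4 : HasDerivAt (fun y : ℝ => -(4*y^2 - 6*y + 5)/(2*(y - 4))) D4 β₄ := by
  have hn : HasDerivAt (fun y : ℝ => -(4*y^2 - 6*y + 5)) (-(4*(2*β₄) - 6)) β₄ := by
    refine ((((((hasDerivAt_id β₄).pow 2).const_mul 4).sub
      ((hasDerivAt_id β₄).const_mul 6)).add_const 5).neg).congr_deriv ?_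
    simp
  have hd : HasDerivAt (fun y : ℝ => 2*(y - 4)) 2 β₄ := by
    simpa using ((hasDerivAt_id β₄).sub_const 4).const_mul 2
  have hden : 2*(β₄ - 4) ≠ 0 := by nlinarith [hβ₄'.2]
  have h := hn.div hd hden
  refine h.congr_deriv ?_
  symm
  rw [eq_div_iff (pow_ne_zero 2 hden)]
  unfold D4 β₄
  linear_combination (9*(Real.sqrt 11+4)/5) * sq11

lemma hd_f6 : HasDerivAt (fun y : ℝ => 3/2 - (y + Real.sqrt (y^2 - 4*y + 16))/4) D5 β₅ := by
  have hq : HasDerivAt (fun y : ℝ => y^2 - 4*y + 16) (2*β₅ - 4) β₅ := by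
    simpa using (((hasDerivAt_id β₅).pow 2).sub ((hasDerivAt_id β₅).const_mul 4)).add_const 16
  have hs := hq.sqrt (by nlinarith [hβ₅'.1, hβ₅'.2] : β₅^2 - 4*β₅ + 16 ≠ 0)
  have h := (hasDerivAt_const β₅ (3/2 : ℝ)).sub (((hasDerivAt_id β₅).add hs).div_const 4)
  refine h.congr_deriv ?_
  symm
  rw [cf6]
  unfold D5
  have h9 : (0:ℝ) < 9 - Real.sqrt 3 := by nlinarith [b3hi]
  have hb5 : β₅ = (7 - 3 * Real.sqrt 3)/2 := rfl
  rw [hb5]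
  field_simp
  ring_nf
  nlinarith [sq3]

lemma diff4 : DifferentiableAt ℝ h₂ β₄ := by
  have H12 := h12; have H23 := h23; have H34 := h34; have H45 := h45; have H51 := h51
  have h5v : HasDerivAt (fun y : ℝ => Real.sqrt (12*y + 42) - 6 - y) D4 β₄ := by
    have h := hd_f5 β₄ (by nlinarith [hβ₄'.1])
    convert h using 1
    rw [cf4]
    unfold D4
    have : (0:ℝ) < 3 * Real.sqrt 11 - 3 := by nlinarith [b11lo]
    have : Real.sqrt 11 - 1 ≠ 0 := by nlinarith [b11lo]
    field_simp
    nlinarith [sq11]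
  have h13 : β₁ < β₃ := lt_trans h12 h23
  have h24 : β₂ < β₄ := lt_trans h23 h34
  have hIic : HasDerivWithinAt h₂ D4 (Set.Iic β₄) β₄ := by
    refine hd_f4.hasDerivWithinAt.congr_of_eventuallyEq ?_ ?_
    · filter_upwards [self_mem_nhdsWithin,
        mem_nhdsWithin_of_mem_nhds (Ioi_mem_nhds h34)] with y hy1 hy2
      have h3y : β₃ < y := hy2
      simp only [h₂]
      rw [if_neg (by linarith : ¬ y ≤ β₁), if_neg (by linarith : ¬ y ≤ β₂),
        if_neg (by linarith : ¬ y ≤ β₃), if_pos (show y ≤ β₄ from hy1)]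
    · simp only [h₂]
      rw [if_neg (by linarith : ¬ β₄ ≤ β₁), if_neg (by linarith : ¬ β₄ ≤ β₂),
        if_neg (by linarith : ¬ β₄ ≤ β₃), if_pos le_rfl]
  have hIci : HasDerivWithinAt h₂ D4 (Set.Ici β₄) β₄ := by
    refine h5v.hasDerivWithinAt.congr_of_eventuallyEq ?_ ?_
    · filter_upwards [self_mem_nhdsWithin,
        mem_nhdsWithin_of_mem_nhds (Iio_mem_nhds h45)] with y hy1 hy2
      have h5y : y < β₅ := hy2
      by_cases hyb : y ≤ β₄
      · have hye : y = β₄ := le_antisymm hyb hy1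
        rw [hye]
        simp only [h₂]
        rw [if_neg (by linarith : ¬ β₄ ≤ β₁), if_neg (by linarith : ¬ β₄ ≤ β₂),
          if_neg (by linarith : ¬ β₄ ≤ β₃), if_pos le_rfl]
        exact e4
      · simp only [h₂]
        rw [if_neg (by linarith : ¬ y ≤ β₁), if_neg (by linarith : ¬ y ≤ β₂),
          if_neg (by linarith : ¬ y ≤ β₃), if_neg hyb, if_pos (le_of_lt h5y)]
    · simp only [h₂]
      rw [if_neg (by linarith : ¬ β₄ ≤ β₁), if_neg (by linarith : ¬ β₄ ≤ β₂),
        if_neg (by linarith : ¬ β₄ ≤ β₃), if_pos le_rfl]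
      exact e4
  have h := hIic.union hIci
  rw [Set.Iic_union_Ici] at h
  exact (hasDerivWithinAt_univ.1 h).differentiableAt

lemma diff5 : DifferentiableAt ℝ h₂ β₅ := by
  have H12 := h12; have H23 := h23; have H34 := h34; have H45 := h45; have H51 := h51
  have h5v : HasDerivAt (fun y : ℝ => Real.sqrt (12*y + 42) - 6 - y) D5 β₅ := by
    have h := hd_f5 β₅ (by nlinarith [hβ₅'.1])
    convert h using 1
    rw [cf5]
    unfold D5
    have : (0:ℝ) < 9 - Real.sqrt 3 := by nlinarith [b3hi]
    field_simp
    nlinarith [sq3]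
  have h13 : β₁ < β₃ := lt_trans h12 h23
  have h14 : β₁ < β₄ := lt_trans h13 h34
  have h24 : β₂ < β₄ := lt_trans h23 h34
  have hIic : HasDerivWithinAt h₂ D5 (Set.Iic β₅) β₅ := by
    refine h5v.hasDerivWithinAt.congr_of_eventuallyEq ?_ ?_
    · filter_upwards [self_mem_nhdsWithin,
        mem_nhdsWithin_of_mem_nhds (Ioi_mem_nhds h45)] with y hy1 hy2
      have h4y : β₄ < y := hy2
      simp only [h₂]
      rw [if_neg (by linarith : ¬ y ≤ β₁), if_neg (by linarith : ¬ y ≤ β₂),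
        if_neg (by linarith : ¬ y ≤ β₃), if_neg (by linarith : ¬ y ≤ β₄),
        if_pos (show y ≤ β₅ from hy1)]
    · simp only [h₂]
      rw [if_neg (by linarith : ¬ β₅ ≤ β₁), if_neg (by linarith : ¬ β₅ ≤ β₂),
        if_neg (by linarith : ¬ β₅ ≤ β₃), if_neg (by linarith : ¬ β₅ ≤ β₄), if_pos le_rfl]
  have hIci : HasDerivWithinAt h₂ D5 (Set.Ici β₅) β₅ := by
    refine hd_f6.hasDerivWithinAt.congr_of_eventuallyEq ?_ ?_
    · filter_upwards [self_mem_nhdsWithin] with y hy1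
      by_cases hyb : y ≤ β₅
      · have hye : y = β₅ := le_antisymm hyb hy1
        rw [hye]
        simp only [h₂]
        rw [if_neg (by linarith : ¬ β₅ ≤ β₁), if_neg (by linarith : ¬ β₅ ≤ β₂),
          if_neg (by linarith : ¬ β₅ ≤ β₃), if_neg (by linarith : ¬ β₅ ≤ β₄), if_pos le_rfl]
        exact e5
      · simp only [h₂]
        rw [if_neg (by linarith : ¬ y ≤ β₁), if_neg (by linarith : ¬ y ≤ β₂),
          if_neg (by linarith : ¬ y ≤ β₃), if_neg (by linarith : ¬ y ≤ β₄), if_neg hyb]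
    · simp only [h₂]
      rw [if_neg (by linarith : ¬ β₅ ≤ β₁), if_neg (by linarith : ¬ β₅ ≤ β₂),
        if_neg (by linarith : ¬ β₅ ≤ β₃), if_neg (by linarith : ¬ β₅ ≤ β₄), if_pos le_rfl]
      exact e5
  have h := hIic.union hIci
  rw [Set.Iic_union_Ici] at h
  exact (hasDerivWithinAt_univ.1 h).differentiableAt

lemma end0 : h₂ 0 = (5 - Real.sqrt 13)/4 := by
  simp only [h₂]
  rw [if_pos (le_of_lt hβ₁0)]
  norm_num

lemma end1 : h₂ 1 = (5 - Real.sqrt 13)/4 := by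
  have H12 := h12; have H23 := h23; have H34 := h34; have H45 := h45; have H51 := h51
  have Hb1 := hβ₁'
  simp only [h₂]
  rw [if_neg (by linarith : ¬ (1:ℝ) ≤ β₁), if_neg (by linarith : ¬ (1:ℝ) ≤ β₂),
    if_neg (by linarith : ¬ (1:ℝ) ≤ β₃), if_neg (by linarith : ¬ (1:ℝ) ≤ β₄),
    if_neg (by linarith : ¬ (1:ℝ) ≤ β₅)]
  rw [show (1:ℝ)^2 - 4*1 + 16 = 13 by norm_num]
  ring

theorem robbins_n4_h2_properties :
    -- the branch formulas agree at each βᵢ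
    ((5 - β₁ - Real.sqrt (β₁^2 + 6*β₁ + 13))/4 = Real.sqrt (8*β₁ + 54) - β₁ - 7) ∧
    (Real.sqrt (8*β₂ + 54) - β₂ - 7 = β₂) ∧
    (β₃ = -(4*β₃^2 - 6*β₃ + 5)/(2*(β₃ - 4))) ∧
    (-(4*β₄^2 - 6*β₄ + 5)/(2*(β₄ - 4)) = Real.sqrt (12*β₄ + 42) - 6 - β₄) ∧
    (Real.sqrt (12*β₅ + 42) - 6 - β₅ = 3/2 - (β₅ + Real.sqrt (β₅^2 - 4*β₅ + 16))/4) ∧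
    -- h₂ maps [0,1] into [0,1] and is continuous on [0,1]
    (∀ x ∈ Set.Icc (0:ℝ) 1, h₂ x ∈ Set.Icc (0:ℝ) 1) ∧
    ContinuousOn h₂ (Set.Icc (0:ℝ) 1) ∧
    -- h₂ is differentiable at β₁, β₄ and β₅
    DifferentiableAt ℝ h₂ β₁ ∧ DifferentiableAt ℝ h₂ β₄ ∧ DifferentiableAt ℝ h₂ β₅ ∧
    -- endpoint values
    h₂ 0 = (5 - Real.sqrt 13)/4 ∧ h₂ 1 = (5 - Real.sqrt 13)/4 := by
  refine ⟨e1, e2, e3, e4, e5, range_h₂, ?_, diff1, diff4, diff5, end0, end1⟩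
  rw [hG]
  exact contG.continuousOn
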